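/- Let M be a symmetric integer n×n matrix and let L = Σ_{1≤i≤j≤n} (⌈log₂(|m_ij|+1)⌉ + 1) be its binary encoding length. Let γ = min_{x∈[0,1]ⁿ} xᵀMx. Then γ = 0 if M is copositive, and γ ≤ −2^{−(2L−1)} if M is not copositive. -/

import Mathlib

open Matrix Finset

/-- Binary encoding length of a symmetric integer matrix:
`L = Σ_{1 ≤ i ≤ j ≤ n} (⌈log₂(|m_ij|+1)⌉ + 1)`. -/
def encodingLength {n : ℕ} (M : Matrix (Fin n) (Fin n) ℤ) : ℕ :=
  ∑ i : Fin n, ∑ j ∈ Finset.univ.filter (fun j => i ≤ j),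
    (Nat.clog 2 ((M i j).natAbs + 1) + 1)





section lemmas
variable {n : ℕ}

lemma quad_expand (A : Matrix (Fin n) (Fin n) ℝ) (hA : A.IsSymm) (x d : Fin n → ℝ) (t : ℝ) :
    (x + t • d) ⬝ᵥ A *ᵥ (x + t • d) =
      x ⬝ᵥ A *ᵥ x + 2*t*(d ⬝ᵥ A *ᵥ x) + t^2 * (d ⬝ᵥ A *ᵥ d) := by
  have hsym : x ⬝ᵥ A *ᵥ d = d ⬝ᵥ A *ᵥ x := by
    rw [dotProduct_mulVec, ← mulVec_transpose, hA.eq, dotProduct_comm, dotProduct_mulVec,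
      ← mulVec_transpose, hA.eq]
  simp only [mulVec_add, mulVec_smul, dotProduct_add, add_dotProduct, smul_dotProduct,
    dotProduct_smul, smul_eq_mul]
  rw [hsym]; ring

lemma deriv_zero_of_min (g a ε : ℝ) (hε : 0 < ε)
    (h : ∀ t : ℝ, |t| ≤ ε → 0 ≤ 2*t*g + t^2*a) : g = 0 := by
  by_contra hg
  have key : ∀ s : ℝ, 0 < s → s ≤ ε → s * |a| ≤ |g| → False := by
    intro s hs hsε hsa
    rcases lt_or_gt_of_ne hg with hgneg | hgpos
    · have := h s (by rw [abs_of_pos hs]; exact hsε)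
      nlinarith [le_abs_self a, abs_of_neg hgneg]
    · have := h (-s) (by rw [abs_neg, abs_of_pos hs]; exact hsε)
      nlinarith [le_abs_self a, abs_of_pos hgpos]
  have hgabs : 0 < |g| := abs_pos.mpr hg
  exact key (min ε (|g| / (|a| + 1))) (lt_min hε (by positivity)) (min_le_left _ _)
    (by
      have h1 : min ε (|g| / (|a| + 1)) ≤ |g| / (|a| + 1) := min_le_right _ _
      have h2 : |g| / (|a| + 1) * |a| ≤ |g| := by
        rw [div_mul_eq_mul_div, div_le_iff₀ (by positivity)]
        nlinarith [abs_nonneg a, abs_nonneg g]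
      nlinarith [abs_nonneg a, mul_le_mul_of_nonneg_right h1 (abs_nonneg a)])

end lemmas

section kkt
variable {n : ℕ}

-- γ is a lower bound for the quadratic form on the cube, x is a minimizer
lemma kkt_interior (A : Matrix (Fin n) (Fin n) ℝ) (hA : A.IsSymm) (γ : ℝ)
    (hlb : ∀ y : Fin n → ℝ, (∀ i, y i ∈ Set.Icc (0:ℝ) 1) → γ ≤ y ⬝ᵥ A *ᵥ y)
    (x : Fin n → ℝ) (hx : ∀ i, x i ∈ Set.Icc (0:ℝ) 1) (hmin : x ⬝ᵥ A *ᵥ x = γ)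
    (i : Fin n) (h0 : 0 < x i) (h1 : x i < 1) : (A *ᵥ x) i = 0 := by
  have key : ∀ t : ℝ, |t| ≤ min (x i) (1 - x i) →
      0 ≤ 2*t*((Pi.single i 1 : Fin n → ℝ) ⬝ᵥ A *ᵥ x) +
        t^2*((Pi.single i 1 : Fin n → ℝ) ⬝ᵥ A *ᵥ (Pi.single i 1)) := by
    intro t ht
    have hmem : ∀ j, (x + t • (Pi.single i 1 : Fin n → ℝ)) j ∈ Set.Icc (0:ℝ) 1 := by
      intro j
      by_cases hj : j = i
      · subst hj
        simp only [Pi.add_apply, Pi.smul_apply, Pi.single_eq_same, smul_eq_mul, mul_one]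
        constructor
        · have := abs_le.mp ht
          have := min_le_left (x j) (1 - x j)
          linarith [(abs_le.mp ht).1, min_le_left (x j) (1 - x j)]
        · linarith [(abs_le.mp ht).2, min_le_right (x j) (1 - x j)]
      · simpa [Pi.single_eq_of_ne hj] using hx j
    have := hlb _ hmem
    rw [quad_expand A hA x (Pi.single i 1) t, hmin] at this
    linarith
  have hg := deriv_zero_of_min _ _ _ (lt_min h0 (by linarith)) key
  rwa [single_dotProduct, one_mul] at hg

end kkt


lemma det_natAbs_le {ι : Type*} [Fintype ι] [DecidableEq ι] (B : Matrix ι ι ℤ) :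
    B.det.natAbs ≤ ∏ a : ι, ∑ b : ι, (B a b).natAbs := by
  rw [← Matrix.det_transpose, Matrix.det_apply]
  have habs : (∑ σ : Equiv.Perm ι, Equiv.Perm.sign σ • ∏ i, B.transpose (σ i) i).natAbs
      ≤ ∑ σ : Equiv.Perm ι, ((Equiv.Perm.sign σ • ∏ i, B.transpose (σ i) i).natAbs) := by
    rw [← Nat.cast_le (α := ℤ)]
    push_cast
    exact Finset.abs_sum_le_sum_abs _ _
  refine habs.trans ?_
  calc ∑ σ : Equiv.Perm ι, (Equiv.Perm.sign σ • ∏ i, B.transpose (σ i) i).natAbs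
      = ∑ σ : Equiv.Perm ι, ∏ i, (B i (σ i)).natAbs := by
        refine Finset.sum_congr rfl fun σ _ => ?_
        simp only [Units.smul_def, smul_eq_mul, Int.natAbs_mul, Int.units_natAbs, one_mul,
          Matrix.transpose_apply]
        exact map_prod Int.natAbsHom (fun i => B i (σ i)) univ
    _ ≤ ∑ f ∈ Fintype.piFinset (fun _ : ι => (univ : Finset ι)), ∏ i, (B i (f i)).natAbs := by
        have hinj : ∀ σ ∈ (univ : Finset (Equiv.Perm ι)), ∀ τ ∈ (univ : Finset (Equiv.Perm ι)),
            (DFunLike.coe : Equiv.Perm ι → ι → ι) σ = (DFunLike.coe : Equiv.Perm ι → ι → ι) τ →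
            σ = τ := fun σ _ τ _ h => DFunLike.coe_injective h
        rw [show (∑ σ : Equiv.Perm ι, ∏ i, (B i (σ i)).natAbs)
            = ∑ f ∈ (univ : Finset (Equiv.Perm ι)).image (DFunLike.coe : Equiv.Perm ι → ι → ι),
                ∏ i, (B i (f i)).natAbs from (Finset.sum_image (g := (DFunLike.coe : Equiv.Perm ι → ι → ι)) (f := fun h : ι → ι => ∏ i, (B i (h i)).natAbs) hinj).symm]
        refine Finset.sum_le_sum_of_subset fun f _ => ?_
        simp [Fintype.mem_piFinset]
    _ = ∏ a : ι, ∑ b : ι, (B a b).natAbs := (Finset.prod_univ_sum (fun _ : ι => (univ : Finset ι)) (fun i j => (B i j).natAbs)).symm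

lemma sum_le_prod_add_one {ι : Type*} [Fintype ι] (a : ι → ℕ) :
    ∑ i : ι, a i ≤ ∏ i : ι, (a i + 1) := by
  classical
  induction (univ : Finset ι) using Finset.induction with
  | empty => simp
  | @insert i s h ih =>
    rw [Finset.sum_insert h, Finset.prod_insert h]
    calc a i + ∑ j ∈ s, a j ≤ a i + ∏ j ∈ s, (a j + 1) := by omega
      _ ≤ (a i + 1) * ∏ j ∈ s, (a j + 1) := by
          have hp : 1 ≤ ∏ j ∈ s, (a j + 1) := Nat.one_le_iff_ne_zero.mpr
            (Finset.prod_ne_zero_iff.mpr fun j _ => by omega)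
          nlinarith

lemma main_struct {n : ℕ} (M : Matrix (Fin n) (Fin n) ℤ) (hsym : M.IsSymm) (γ : ℝ)
    (hγ : IsLeast {r : ℝ | ∃ x : Fin n → ℝ,
      (∀ i, x i ∈ Set.Icc (0 : ℝ) 1) ∧ r = x ⬝ᵥ (M.map ((↑) : ℤ → ℝ)) *ᵥ x} γ) :
    ∃ D K : ℤ, D ≠ 0 ∧ D.natAbs ≤ ∏ i : Fin n, ∏ j : Fin n, ((M i j).natAbs + 1) ∧
      (D : ℝ) * γ = (K : ℝ) := by
  classical
  set A : Matrix (Fin n) (Fin n) ℝ := M.map ((↑) : ℤ → ℝ) with hAdef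
  have hA : A.IsSymm := hsym.map _
  have hlb : ∀ y : Fin n → ℝ, (∀ i, y i ∈ Set.Icc (0:ℝ) 1) → γ ≤ y ⬝ᵥ A *ᵥ y :=
    fun y hy => hγ.2 ⟨y, hy, rfl⟩
  -- minimizers
  set Min : (Fin n → ℝ) → Prop :=
    fun x => (∀ i, x i ∈ Set.Icc (0:ℝ) 1) ∧ x ⬝ᵥ A *ᵥ x = γ with hMdef
  set fc : (Fin n → ℝ) → ℕ :=
    fun x => (univ.filter (fun i => x i ≠ 0 ∧ x i ≠ 1)).card with hfcdef
  set N : Set ℕ := {m | ∃ x, Min x ∧ fc x = m} with hNdef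
  have hNne : N.Nonempty := by
    obtain ⟨x, hx, hqx⟩ := hγ.1
    exact ⟨fc x, x, ⟨hx, hqx.symm⟩, rfl⟩
  obtain ⟨x, hxMin, hxfc⟩ := Nat.sInf_mem hNne
  set S : Finset (Fin n) := univ.filter (fun i => x i ≠ 0 ∧ x i ≠ 1) with hSdef
  have hxc := hxMin.1
  have hxq := hxMin.2
  have hSfrac : ∀ i ∈ S, 0 < x i ∧ x i < 1 := by
    intro i hi
    rw [hSdef, Finset.mem_filter] at hi
    rcases (hxc i) with ⟨hl, hr⟩
    exact ⟨lt_of_le_of_ne hl (Ne.symm hi.2.1), lt_of_le_of_ne hr hi.2.2⟩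
  have hKKT : ∀ i ∈ S, (A *ᵥ x) i = 0 := fun i hi =>
    kkt_interior A hA γ hlb x hxc hxq i (hSfrac i hi).1 (hSfrac i hi).2
  set B : Matrix ↥S ↥S ℤ := fun a b => M a.1 b.1 with hBdef
  have hBmap : B.map ((↑) : ℤ → ℝ) = fun (a b : ↥S) => A a.1 b.1 := rfl
  -- determinant of the fractional submatrix is nonzero
  have hdet : B.det ≠ 0 := by
    intro hd0
    have hdet0R : (B.map ((↑) : ℤ → ℝ)).det = 0 := by
      have h := (RingHom.map_det (Int.castRingHom ℝ) B).symm
      rw [hd0] at h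
      simpa using h
    obtain ⟨u, hu0, huv⟩ := (Matrix.exists_mulVec_eq_zero_iff).mpr hdet0R
    set d : Fin n → ℝ := fun i => if h : i ∈ S then u ⟨i, h⟩ else 0 with hddef
    have hd_out : ∀ i, i ∉ S → d i = 0 := fun i hi => dif_neg hi
    have hd_in : ∀ (a : ↥S), d a.1 = u a := fun a => by
      rw [hddef]; simp only [dif_pos a.2]
    have hAd : ∀ i ∈ S, (A *ᵥ d) i = 0 := by
      intro i hi
      have expand : (A *ᵥ d) i = ∑ j ∈ S, A i j * d j := by
        rw [Matrix.mulVec, dotProduct]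
        exact (Finset.sum_subset (Finset.subset_univ S)
          (fun j _ hj => by rw [hd_out j hj, mul_zero])).symm
      have conv : (∑ j ∈ S, A i j * d j) = ∑ b : ↥S, A i b.1 * u b := by
        rw [← Finset.sum_coe_sort S (fun j => A i j * d j)]
        exact Finset.sum_congr rfl fun b _ => by rw [hd_in b]
      have := congrFun huv ⟨i, hi⟩
      rw [expand, conv]
      simp [Matrix.mulVec, dotProduct, hBmap] at this
      exact this
    have hdAx : d ⬝ᵥ A *ᵥ x = 0 := by
      rw [dotProduct]
      refine Finset.sum_eq_zero fun i _ => ?_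
      by_cases hi : i ∈ S
      · rw [hKKT i hi, mul_zero]
      · rw [hd_out i hi, zero_mul]
    have hdAd : d ⬝ᵥ A *ᵥ d = 0 := by
      rw [dotProduct]
      refine Finset.sum_eq_zero fun i _ => ?_
      by_cases hi : i ∈ S
      · rw [hAd i hi, mul_zero]
      · rw [hd_out i hi, zero_mul]
    -- exit time
    set F : Finset (Fin n) := S.filter (fun i => d i ≠ 0) with hFdef
    have hFne : F.Nonempty := by
      have : ∃ i, d i ≠ 0 := by
        by_contra hall
        push_neg at hall
        exact hu0 (funext fun a => by rw [← hd_in a]; simp [hall])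
      obtain ⟨i, hdi⟩ := this
      have hiS : i ∈ S := by
        by_contra hiS
        exact hdi (hd_out i hiS)
      exact ⟨i, Finset.mem_filter.mpr ⟨hiS, hdi⟩⟩
    set c : Fin n → ℝ := fun i => if 0 < d i then (1 - x i) / d i else x i / (-d i) with hcdef
    set t : ℝ := F.inf' hFne c with htdef
    have hcpos : ∀ i ∈ F, 0 < c i := by
      intro i hi
      rw [hFdef, Finset.mem_filter] at hi
      obtain ⟨h0i, h1i⟩ := hSfrac i hi.1
      rw [hcdef]
      by_cases hdi : 0 < d i
      · simp only [if_pos hdi]; exact div_pos (by linarith) hdi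
      · simp only [if_neg hdi]
        have : d i < 0 := lt_of_le_of_ne (not_lt.mp hdi) hi.2
        exact div_pos h0i (by linarith)
    have htpos : 0 < t := (Finset.lt_inf'_iff hFne).mpr hcpos
    have htle : ∀ i ∈ F, t ≤ c i := fun i hi => Finset.inf'_le c hi
    obtain ⟨i₀, hi₀F, hti₀⟩ := Finset.exists_mem_eq_inf' hFne c
    set x' : Fin n → ℝ := x + t • d with hx'def
    have hx'eq : ∀ i, x' i = x i + t * d i := fun i => rfl
    have hx'out : ∀ i, i ∉ S → x' i = x i := by
      intro i hi; rw [hx'eq, hd_out i hi, mul_zero, add_zero]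
    have hx'mem : ∀ i ∈ F, x i + t * d i ∈ Set.Icc (0:ℝ) 1 ∧
        (c i = t → (x i + t * d i = 0 ∨ x i + t * d i = 1)) := by
      intro i hi
      have hFi := Finset.mem_filter.mp hi
      obtain ⟨h0i, h1i⟩ := hSfrac i hFi.1
      have hdi := hFi.2
      have hct := htle i hi
      rcases lt_or_gt_of_ne hdi with hneg | hpos
      · have hci : c i = x i / (-d i) := by
          rw [hcdef]; simp only [if_neg (not_lt.mpr (le_of_lt hneg))]
        have hkey : x i + c i * d i = 0 := by
          rw [hci, div_mul_eq_mul_div, mul_div_assoc, div_neg, div_self hneg.ne]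
          ring
        constructor
        · constructor
          · have : c i * d i ≤ t * d i := by
              exact mul_le_mul_of_nonpos_right hct (le_of_lt hneg)
            linarith
          · nlinarith
        · intro hcit; rw [← hcit]; left; exact hkey
      · have hci : c i = (1 - x i) / d i := by rw [hcdef]; simp only [if_pos hpos]
        have hkey : x i + c i * d i = 1 := by
          rw [hci, div_mul_eq_mul_div, mul_div_assoc, div_self hpos.ne']
          ring
        constructor
        · constructor
          · nlinarith
          · have : t * d i ≤ c i * d i := mul_le_mul_of_nonneg_right hct (le_of_lt hpos)
            linarith
        · intro hcit; rw [← hcit]; right; exact hkey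
    have hx'c : ∀ i, x' i ∈ Set.Icc (0:ℝ) 1 := by
      intro i
      by_cases hiS : i ∈ S
      · by_cases hdi : d i = 0
        · rw [hx'eq, hdi, mul_zero, add_zero]; exact hxc i
        · exact (hx'mem i (Finset.mem_filter.mpr ⟨hiS, hdi⟩)).1
      · rw [hx'out i hiS]; exact hxc i
    have hx'q : x' ⬝ᵥ A *ᵥ x' = γ := by
      rw [hx'def, quad_expand A hA x d t, hxq, hdAx, hdAd]; ring
    -- contradiction with minimality of fractional count
    have hsub : (univ.filter (fun i => x' i ≠ 0 ∧ x' i ≠ 1)) ⊆ S := by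
      intro i hi
      rw [Finset.mem_filter] at hi
      by_contra hiS
      have hx'i := hx'out i hiS
      have hiS' : i ∉ S := hiS
      rw [hSdef, Finset.mem_filter, not_and] at hiS'
      have := hiS' (Finset.mem_univ i)
      rw [not_and_or, not_not, not_not] at this
      rcases this with h | h
      · exact hi.2.1 (by rw [hx'i, h])
      · exact hi.2.2 (by rw [hx'i, h])
    have hi₀S : i₀ ∈ S := (Finset.mem_filter.mp hi₀F).1
    have hi₀not : i₀ ∉ (univ.filter (fun i => x' i ≠ 0 ∧ x' i ≠ 1)) := by
      have := (hx'mem i₀ hi₀F).2 hti₀.symm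
      intro hmem
      rw [Finset.mem_filter] at hmem
      rcases this with h | h
      · exact hmem.2.1 ((hx'eq i₀).trans h)
      · exact hmem.2.2 ((hx'eq i₀).trans h)
    have hlt : fc x' < fc x := by
      have h1 : fc x' = (univ.filter (fun i => x' i ≠ 0 ∧ x' i ≠ 1)).card := rfl
      have h2 : fc x = S.card := rfl
      rw [h1, h2]
      exact Finset.card_lt_card ((Finset.ssubset_iff_of_subset hsub).mpr ⟨i₀, hi₀S, hi₀not⟩)
    have hmem : fc x' ∈ N := ⟨x', ⟨hx'c, hx'q⟩, rfl⟩
    have := Nat.sInf_le hmem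
    omega
  -- Cramer
  set I1 : Finset (Fin n) := univ.filter (fun j => x j = 1) with hI1def
  have hzero : ∀ j, j ∉ S → j ∉ I1 → x j = 0 := by
    intro j hjS hjI
    rw [hSdef, Finset.mem_filter, not_and] at hjS
    have h := hjS (Finset.mem_univ j)
    rw [not_and_or, not_not, not_not] at h
    rcases h with h | h
    · exact h
    · exact absurd (Finset.mem_filter.mpr ⟨Finset.mem_univ j, h⟩) hjI
  have hdisj : Disjoint S I1 := by
    rw [Finset.disjoint_left]
    intro j hjS hjI
    rw [hSdef, Finset.mem_filter] at hjS
    rw [hI1def, Finset.mem_filter] at hjI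
    exact hjS.2.2 hjI.2
  have hAcast : ∀ i j, A i j = (M i j : ℝ) := fun i j => rfl
  have hsplit : ∀ i : Fin n, (A *ᵥ x) i =
      (∑ j ∈ I1, A i j) + ∑ b : ↥S, A i b.1 * x b.1 := by
    intro i
    have e1 : (A *ᵥ x) i = ∑ j ∈ S ∪ I1, A i j * x j := by
      rw [Matrix.mulVec, dotProduct]
      exact (Finset.sum_subset (Finset.subset_univ _)
        (fun j _ hj => by
          rw [Finset.mem_union, not_or] at hj
          rw [hzero j hj.1 hj.2, mul_zero])).symm
    rw [e1, Finset.sum_union hdisj, add_comm]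
    congr 1
    · refine Finset.sum_congr rfl fun j hj => ?_
      rw [hI1def, Finset.mem_filter] at hj
      rw [hj.2, mul_one]
    · exact (Finset.sum_coe_sort S (fun j => A i j * x j)).symm
  set bI : ↥S → ℤ := fun a => -(∑ j ∈ I1, M a.1 j) with hbdef
  have hBv : (B.map ((↑) : ℤ → ℝ)) *ᵥ (fun a => x a.1) = fun a => (bI a : ℝ) := by
    funext a
    have h0 : (A *ᵥ x) a.1 = 0 := hKKT a.1 a.2
    rw [hsplit a.1] at h0
    have lhs : ((B.map ((↑) : ℤ → ℝ)) *ᵥ (fun a => x a.1)) a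
        = ∑ b : ↥S, A a.1 b.1 * x b.1 := rfl
    rw [lhs, hbdef]
    have hc : ∀ i j, ((M i j : ℤ) : ℝ) = A i j := fun i j => rfl
    push_cast
    simp only [hc]
    linarith
  have hdetR : (B.map ((↑) : ℤ → ℝ)).det = (B.det : ℝ) :=
    (RingHom.map_det (Int.castRingHom ℝ) B).symm
  have hdetRne : (B.map ((↑) : ℤ → ℝ)).det ≠ 0 := by
    rw [hdetR]
    exact_mod_cast hdet
  have hinj : Function.Injective ((B.map ((↑) : ℤ → ℝ)).mulVec) :=
    Matrix.mulVec_injective_iff_isUnit.mpr ((Matrix.isUnit_iff_isUnit_det _).mpr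
      (isUnit_iff_ne_zero.mpr hdetRne))
  have hcr : (B.map ((↑) : ℤ → ℝ)).det • (fun a : ↥S => x a.1)
      = Matrix.cramer (B.map ((↑) : ℤ → ℝ)) (fun a => (bI a : ℝ)) := by
    apply hinj
    rw [Matrix.mulVec_smul, hBv, Matrix.mulVec_cramer]
  have hxa : ∀ a : ↥S, (B.det : ℝ) * x a.1 = ((B.updateCol a bI).det : ℝ) := by
    intro a
    have h := congrFun hcr a
    rw [Pi.smul_apply, smul_eq_mul, hdetR] at h
    rw [h, Matrix.cramer_apply]
    have : (B.map ((↑) : ℤ → ℝ)).updateCol a (fun a => (bI a : ℝ))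
        = (B.updateCol a bI).map ((↑) : ℤ → ℝ) := by
      rw [Matrix.map_updateCol]
      rfl
    rw [this]
    exact (RingHom.map_det (Int.castRingHom ℝ) (B.updateCol a bI)).symm
  -- value identity
  have hγsum : γ = ∑ i ∈ I1, (A *ᵥ x) i := by
    rw [← hxq, dotProduct]
    rw [← Finset.sum_subset (Finset.subset_univ I1) (fun i _ hi => ?_)]
    · refine Finset.sum_congr rfl fun i hi => ?_
      rw [hI1def, Finset.mem_filter] at hi
      rw [hi.2, one_mul]
    · by_cases hiS : i ∈ S
      · rw [hKKT i hiS, mul_zero]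
      · rw [hzero i hiS hi, zero_mul]
  refine ⟨B.det, ∑ i ∈ I1, (B.det * (∑ j ∈ I1, M i j)
      + ∑ a : ↥S, M i a.1 * (B.updateCol a bI).det), hdet, ?_, ?_⟩
  · -- determinant bound
    calc B.det.natAbs ≤ ∏ a : ↥S, ∑ b : ↥S, (B a b).natAbs := det_natAbs_le B
      _ ≤ ∏ a : ↥S, ∏ j : Fin n, ((M a.1 j).natAbs + 1) := by
          refine Finset.prod_le_prod' fun a _ => ?_
          calc ∑ b : ↥S, (B a b).natAbs = ∑ j ∈ S, (M a.1 j).natAbs :=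
              Finset.sum_coe_sort S (fun j => (M a.1 j).natAbs)
            _ ≤ ∑ j : Fin n, (M a.1 j).natAbs :=
              Finset.sum_le_sum_of_subset (Finset.subset_univ S)
            _ ≤ ∏ j : Fin n, ((M a.1 j).natAbs + 1) := sum_le_prod_add_one _
      _ = ∏ i ∈ S, ∏ j : Fin n, ((M i j).natAbs + 1) :=
          Finset.prod_coe_sort S (fun i => ∏ j : Fin n, ((M i j).natAbs + 1))
      _ ≤ ∏ i : Fin n, ∏ j : Fin n, ((M i j).natAbs + 1) := by
          refine Finset.prod_le_prod_of_subset_of_one_le' (Finset.subset_univ S)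
            (fun i _ _ => ?_)
          exact Nat.one_le_iff_ne_zero.mpr (Finset.prod_ne_zero_iff.mpr fun j _ => by omega)
  · -- (D : ℝ) * γ = K
    rw [hγsum, Finset.mul_sum]
    have hterm : ∀ i ∈ I1, (B.det : ℝ) * (A *ᵥ x) i
        = ((B.det * (∑ j ∈ I1, M i j)
            + ∑ a : ↥S, M i a.1 * (B.updateCol a bI).det : ℤ) : ℝ) := by
      intro i _
      rw [hsplit i, mul_add]
      push_cast
      congr 1
      rw [Finset.mul_sum]
      refine Finset.sum_congr rfl fun a _ => ?_
      have hxa' := hxa a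
      push_cast at hxa'
      rw [← hxa', ← hAcast]
      ring
    rw [Finset.sum_congr rfl hterm]
    push_cast
    rfl



-- E ≤ 2L - 1  (stated additively)
lemma sum_clog_bound {n : ℕ} (hn : 0 < n) (M : Matrix (Fin n) (Fin n) ℤ) (hsym : M.IsSymm) :
    (∑ i : Fin n, ∑ j : Fin n, Nat.clog 2 ((M i j).natAbs + 1)) + 2 ≤ 2 * encodingLength M := by
  classical
  set c : Fin n → Fin n → ℕ := fun i j => Nat.clog 2 ((M i j).natAbs + 1) with hc
  have hcsymm : ∀ i j, c j i = c i j := by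
    intro i j
    rw [hc]
    simp only []
    rw [hsym.apply i j]
  set T : ℕ := ∑ i : Fin n, ∑ j ∈ univ.filter (fun j => i ≤ j), c i j with hT
  have hsplit : ∑ i : Fin n, ∑ j : Fin n, c i j
      = T + ∑ i : Fin n, ∑ j ∈ univ.filter (fun j => ¬ i ≤ j), c i j := by
    rw [hT, ← Finset.sum_add_distrib]
    exact Finset.sum_congr rfl fun i _ =>
      (Finset.sum_filter_add_sum_filter_not univ (fun j => i ≤ j) (c i)).symm
  have h2 : ∑ i : Fin n, ∑ j ∈ univ.filter (fun j => ¬ i ≤ j), c i j ≤ T := by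
    have e1 : ∑ i : Fin n, ∑ j ∈ univ.filter (fun j => ¬ i ≤ j), c i j
        = ∑ i : Fin n, ∑ j : Fin n, if ¬ i ≤ j then c i j else 0 := by
      exact Finset.sum_congr rfl fun i _ => Finset.sum_filter _ _
    have e2 : ∑ i : Fin n, ∑ j : Fin n, (if ¬ i ≤ j then c i j else 0)
        = ∑ j : Fin n, ∑ i : Fin n, (if ¬ i ≤ j then c i j else 0) := Finset.sum_comm
    rw [e1, e2, hT]
    refine Finset.sum_le_sum fun j _ => ?_
    rw [Finset.sum_filter]
    refine Finset.sum_le_sum fun i _ => ?_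
    by_cases h : i ≤ j
    · simp [h]
    · have hji : j ≤ i := le_of_not_ge h
      simp only [h, not_false_iff, if_true, if_pos hji]
      rw [hcsymm]
  have hL : encodingLength M = T + ∑ i : Fin n, (univ.filter (fun j => i ≤ j)).card := by
    rw [encodingLength, hT, ← Finset.sum_add_distrib]
    refine Finset.sum_congr rfl fun i _ => ?_
    rw [Finset.sum_add_distrib, Finset.sum_const, smul_eq_mul, mul_one]
  have hC : 1 ≤ ∑ i : Fin n, (univ.filter (fun j => i ≤ j)).card := by
    have i0 : Fin n := ⟨0, hn⟩
    calc 1 ≤ (univ.filter (fun j => i0 ≤ j)).card := by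
          refine Finset.card_pos.mpr ⟨i0, ?_⟩
          simp
      _ ≤ ∑ i : Fin n, (univ.filter (fun j => i ≤ j)).card :=
          Finset.single_le_sum (f := fun i : Fin n => (univ.filter (fun j => i ≤ j)).card)
            (fun _ _ => Nat.zero_le _) (Finset.mem_univ i0)
  rw [hsplit, hL]
  omega

theorem stmt4 {n : ℕ} (M : Matrix (Fin n) (Fin n) ℤ) (hsym : M.IsSymm)
    (L : ℕ) (hL : L = encodingLength M) (γ : ℝ)
    (hγ : IsLeast {r : ℝ | ∃ x : Fin n → ℝ,
      (∀ i, x i ∈ Set.Icc (0 : ℝ) 1) ∧ r = x ⬝ᵥ (M.map ((↑) : ℤ → ℝ)) *ᵥ x} γ) :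
    ((∀ x : Fin n → ℝ, (∀ i, 0 ≤ x i) → 0 ≤ x ⬝ᵥ (M.map ((↑) : ℤ → ℝ)) *ᵥ x) → γ = 0) ∧
    (¬ (∀ x : Fin n → ℝ, (∀ i, 0 ≤ x i) → 0 ≤ x ⬝ᵥ (M.map ((↑) : ℤ → ℝ)) *ᵥ x) →
      γ ≤ -(2 : ℝ) ^ (-(2 * (L : ℤ) - 1))) := by
  classical
  constructor
  · intro hcop
    obtain ⟨x, hx, hqx⟩ := hγ.1
    have h1 : 0 ≤ γ := hqx ▸ hcop x (fun i => (hx i).1)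
    have h2 : γ ≤ 0 := hγ.2 ⟨0, fun i => by simp, by simp⟩
    linarith
  · intro hncop
    push_neg at hncop
    obtain ⟨y, hy, hqy⟩ := hncop
    set A : Matrix (Fin n) (Fin n) ℝ := M.map ((↑) : ℤ → ℝ) with hAdef
    -- γ < 0
    have hγneg : γ < 0 := by
      set s : ℝ := 1 + ∑ i, y i with hs
      have hyle : ∀ i, y i ≤ ∑ j, y j := fun i =>
        Finset.single_le_sum (fun j _ => hy j) (Finset.mem_univ i)
      have hsum0 : 0 ≤ ∑ i, y i := Finset.sum_nonneg fun i _ => hy i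
      have hspos : 0 < s := by rw [hs]; linarith
      have hzc : ∀ i, (s⁻¹ • y) i ∈ Set.Icc (0:ℝ) 1 := by
        intro i
        have hyi : y i ≤ s := by have := hyle i; rw [hs]; linarith
        constructor
        · exact mul_nonneg (inv_nonneg.mpr hspos.le) (hy i)
        · calc s⁻¹ * y i ≤ s⁻¹ * s :=
              mul_le_mul_of_nonneg_left hyi (inv_nonneg.mpr hspos.le)
            _ = 1 := inv_mul_cancel₀ hspos.ne'
      have hzq : (s⁻¹ • y) ⬝ᵥ A *ᵥ (s⁻¹ • y) = s⁻¹ * s⁻¹ * (y ⬝ᵥ A *ᵥ y) := by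
        rw [Matrix.mulVec_smul, smul_dotProduct, dotProduct_smul]
        simp only [smul_eq_mul]
        ring
      have hle := hγ.2 ⟨s⁻¹ • y, hzc, rfl⟩
      have hinvpos : 0 < s⁻¹ * s⁻¹ := by positivity
      nlinarith
    -- n positive
    have hn : 0 < n := by
      rcases Nat.eq_zero_or_pos n with h0 | h
      · exfalso
        obtain ⟨x, _, hqx⟩ := hγ.1
        subst h0
        have : γ = 0 := by simpa [dotProduct] using hqx
        linarith
      · exact h
    obtain ⟨D, K, hD0, hDb, hDK⟩ := main_struct M hsym γ hγ
    have hK0 : K ≠ 0 := by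
      intro h
      rw [h, Int.cast_zero, mul_eq_zero] at hDK
      rcases hDK with h | h
      · exact hD0 (by exact_mod_cast h)
      · linarith
    -- the determinant bound in ℕ
    have hE := sum_clog_bound hn M hsym
    have hP : (∏ i : Fin n, ∏ j : Fin n, ((M i j).natAbs + 1))
        ≤ 2 ^ (∑ i : Fin n, ∑ j : Fin n, Nat.clog 2 ((M i j).natAbs + 1)) := by
      calc ∏ i : Fin n, ∏ j : Fin n, ((M i j).natAbs + 1)
          ≤ ∏ i : Fin n, ∏ j : Fin n, 2 ^ Nat.clog 2 ((M i j).natAbs + 1) :=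
            Finset.prod_le_prod' fun i _ => Finset.prod_le_prod' fun j _ =>
              Nat.le_pow_clog one_lt_two _
        _ = ∏ i : Fin n, 2 ^ ∑ j : Fin n, Nat.clog 2 ((M i j).natAbs + 1) := by
            exact Finset.prod_congr rfl fun i _ => Finset.prod_pow_eq_pow_sum _ _ _
        _ = 2 ^ (∑ i : Fin n, ∑ j : Fin n, Nat.clog 2 ((M i j).natAbs + 1)) :=
            Finset.prod_pow_eq_pow_sum _ _ _
    have hL1 : 1 ≤ L := by omega
    have hDnat : D.natAbs ≤ 2 ^ (2 * L - 1) := by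
      refine (hDb.trans hP).trans (Nat.pow_le_pow_right (by norm_num) ?_)
      omega
    -- real arithmetic conclusion
    have hDRne : (D : ℝ) ≠ 0 := Int.cast_ne_zero.mpr hD0
    have habs : (1:ℝ) ≤ |(K:ℝ)| := by
      rw [← Int.cast_abs]
      exact_mod_cast Int.one_le_abs hK0
    have hγabs : (1:ℝ) ≤ |(D:ℝ)| * |γ| := by rw [← abs_mul, hDK]; exact habs
    have hDabs : |(D:ℝ)| ≤ 2 ^ (2*L - 1 : ℕ) := by
      rw [← Int.cast_abs]
      have : (|D| : ℤ) ≤ (2:ℤ) ^ (2*L - 1 : ℕ) := by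
        rw [Int.abs_eq_natAbs]
        exact_mod_cast hDnat
      exact_mod_cast this
    have hpow : (0:ℝ) < 2 ^ (2*L-1 : ℕ) := by positivity
    have hge : (1:ℝ) ≤ 2 ^ (2*L-1 : ℕ) * |γ| :=
      hγabs.trans (mul_le_mul_of_nonneg_right hDabs (abs_nonneg γ))
    have hcast : -(2 * (L : ℤ) - 1) = -((2*L - 1 : ℕ) : ℤ) := by
      have : ((2*L - 1 : ℕ) : ℤ) = 2 * (L : ℤ) - 1 := by
        push_cast [Nat.cast_sub (by omega : 1 ≤ 2*L)]
        ring
      omega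
    rw [hcast, _root_.zpow_neg, zpow_natCast]
    have hinv : ((2:ℝ) ^ (2*L-1 : ℕ))⁻¹ ≤ -γ := by
      rw [inv_le_iff_one_le_mul₀ hpow]
      rw [abs_of_neg hγneg] at hge
      linarith [hge]
    linarith
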